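/- arXiv:1602.04684 — 5 statements merged into one kernel-verified Lean document; each statement's English description precedes it below -/
import Mathlib

section
/- There exists an absolute constant C > 0 such that for every k ≥ 0 and all x, x₁, t ∈ ℝ³ with ‖t − x₁‖ ≤ ‖x − x₁‖/2 and x ≠ x₁, one has ‖∇_x g(x,t) − ∇_x g(x,x₁)‖ ≤ C ‖t − x₁‖ (k²/d + k/d² + 1/d³), where d := ‖x − x₁‖. (This is the estimate |∇[g(x,t) − g(x,x₁)]| = O(ak²/d + ak/d² + a/d³) with a = ‖t − x₁‖.) -/
noncomputable section

open Real MeasureTheory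
open scoped BigOperators RealInnerProductSpace

/-- ℝ³ with the Euclidean norm. -/
abbrev R3 : Type := EuclideanSpace ℝ (Fin 3)

/-- ℂ³ (componentwise). -/
abbrev C3 : Type := Fin 3 → ℂ

/-- The j-th partial derivative of a complex-valued function on ℝ³. -/
def pd (j : Fin 3) (f : R3 → ℂ) (x : R3) : ℂ :=
  fderiv ℝ f x (EuclideanSpace.single j 1)

/-- curl F = (∂₂F₃ − ∂₃F₂, ∂₃F₁ − ∂₁F₃, ∂₁F₂ − ∂₂F₁) (0-indexed). -/
def curl (F : R3 → C3) (x : R3) : C3 :=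
  ![pd 1 (fun y => F y 2) x - pd 2 (fun y => F y 1) x,
    pd 2 (fun y => F y 0) x - pd 0 (fun y => F y 2) x,
    pd 0 (fun y => F y 1) x - pd 1 (fun y => F y 0) x]

/-- The gradient (∂₁f, ∂₂f, ∂₃f) as a vector in ℂ³. -/
def grad (f : R3 → ℂ) (x : R3) : C3 := fun j => pd j f x

/-- The outgoing Green's function of the Helmholtz operator with wave number k. -/
def g (k : ℝ) (x y : R3) : ℂ :=
  Complex.exp (Complex.I * k * ‖x - y‖) / (4 * Real.pi * ‖x - y‖)

/-- The Euclidean norm on ℂ³. -/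
def norm3 (v : C3) : ℝ := ‖(WithLp.equiv 2 (Fin 3 → ℂ)).symm v‖

/-! ### Auxiliary machinery -/

lemma hasFDerivAt_norm_of_ne {E : Type*} [NormedAddCommGroup E] [InnerProductSpace ℝ E]
    {v : E} (hv : v ≠ 0) :
    HasFDerivAt (fun w : E => ‖w‖) (‖v‖⁻¹ • (innerSL ℝ v)) v := by
  have h0 : (0:ℝ) < ‖v‖ := norm_pos_iff.mpr hv
  have hinner : HasFDerivAt (fun w : E => (inner ℝ w w : ℝ))
      ((fderivInnerCLM ℝ ((v : E), (v : E))).comp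
        ((ContinuousLinearMap.id ℝ E).prod (ContinuousLinearMap.id ℝ E))) v :=
    (hasFDerivAt_id v).inner ℝ (hasFDerivAt_id v)
  have hne : (inner ℝ v v : ℝ) ≠ 0 := by
    simpa [inner_self_eq_zero] using hv
  have hsqrt : HasDerivAt Real.sqrt (1 / (2 * Real.sqrt (inner ℝ v v : ℝ))) (inner ℝ v v : ℝ) :=
    Real.hasDerivAt_sqrt hne
  have key := HasDerivAt.comp_hasFDerivAt (f := fun w : E => (inner ℝ w w : ℝ)) v hsqrt hinner
  have heq : (Real.sqrt ∘ fun w : E => (inner ℝ w w : ℝ)) = fun w : E => ‖w‖ := by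
    funext w
    simp [Function.comp, real_inner_self_eq_norm_mul_norm, Real.sqrt_mul_self (norm_nonneg w)]
  rw [heq] at key
  refine key.congr_fderiv ?_
  ext u
  have : Real.sqrt (inner ℝ v v : ℝ) = ‖v‖ := by
    rw [real_inner_self_eq_norm_mul_norm, Real.sqrt_mul_self (norm_nonneg v)]
  simp [this, fderivInnerCLM_apply, real_inner_comm v u]
  field_simp
  ring

/-- The radial profile of the Green's function. -/
def Phi (k : ℝ) (z : ℂ) : ℂ :=
  Complex.exp (Complex.I * k * z) / (4 * Real.pi * z)

/-- φ'(r)/r, the scalar appearing in ∇g. -/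
def Psi (k r : ℝ) : ℂ :=
  Complex.exp (Complex.I * k * r) * (Complex.I * k * r - 1) / (4 * Real.pi * r ^ 3)

lemma hasDerivAt_Phi (k : ℝ) {z : ℂ} (hz : z ≠ 0) :
    HasDerivAt (Phi k)
      (Complex.exp (Complex.I * k * z) * (Complex.I * k * z - 1) / (4 * Real.pi * z ^ 2)) z := by
  have hpi : (Real.pi : ℂ) ≠ 0 := by exact_mod_cast Real.pi_ne_zero
  have hden : (4 * (Real.pi:ℂ) * z) ≠ 0 := by
    simp [hz, hpi]
  have hnum : HasDerivAt (fun z : ℂ => Complex.exp (Complex.I * k * z))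
      (Complex.exp (Complex.I * k * z) * (Complex.I * k)) z := by
    have := ((hasDerivAt_id z).const_mul (Complex.I * k)).cexp
    simpa using this
  have hd : HasDerivAt (fun z : ℂ => 4 * (Real.pi:ℂ) * z) (4 * Real.pi) z := by
    simpa using (hasDerivAt_id z).const_mul (4 * (Real.pi:ℂ))
  have := hnum.div hd hden
  refine this.congr_deriv ?_
  field_simp

lemma hasDerivAt_Psi (k : ℝ) {r : ℝ} (hr : r ≠ 0) :
    HasDerivAt (fun s : ℝ => Psi k s)
      (Complex.exp (Complex.I * k * r) * (3 - 3 * Complex.I * k * r - (k * r : ℝ) ^ 2)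
        / (4 * Real.pi * r ^ 4)) r := by
  have hpi : (Real.pi : ℂ) ≠ 0 := by exact_mod_cast Real.pi_ne_zero
  have hrc : (r : ℂ) ≠ 0 := by exact_mod_cast hr
  have hof : HasDerivAt (fun s : ℝ => (s : ℂ)) 1 r := by
    simpa using (hasDerivAt_id r).ofReal_comp
  have hexp : HasDerivAt (fun s : ℝ => Complex.exp (Complex.I * k * s))
      (Complex.exp (Complex.I * k * r) * (Complex.I * k)) r := by
    have := (hof.const_mul (Complex.I * k)).cexp
    simpa using this
  have hlin : HasDerivAt (fun s : ℝ => (Complex.I * k * s - 1)) (Complex.I * k) r := by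
    simpa using (hof.const_mul (Complex.I * k)).sub_const 1
  have hnum := hexp.mul hlin
  have hpow0 : HasDerivAt (fun s : ℝ => s ^ 3) (3 * r ^ 2) r := by
    simpa using hasDerivAt_pow 3 r
  have hpow : HasDerivAt (fun s : ℝ => ((s ^ 3 : ℝ) : ℂ)) ((3 * r ^ 2 : ℝ) : ℂ) r :=
    hpow0.ofReal_comp
  have hden : HasDerivAt (fun s : ℝ => (4 * (Real.pi:ℂ) * ((s ^ 3 : ℝ) : ℂ)))
      ((4 * (Real.pi:ℂ)) * ((3 * r ^ 2 : ℝ) : ℂ)) r := hpow.const_mul (4 * (Real.pi:ℂ))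
  have hden' : HasDerivAt (fun s : ℝ => (4 * (Real.pi:ℂ) * (s:ℂ) ^ 3))
      ((4 * (Real.pi:ℂ)) * ((3 * r ^ 2 : ℝ) : ℂ)) r := by
    convert hden using 2 with s
    push_cast
    ring
  have hdne : (4 * (Real.pi:ℂ) * (r:ℂ) ^ 3) ≠ 0 := by simp [hpi, hrc]
  have := hnum.div hden' hdne
  refine this.congr_deriv ?_
  push_cast
  field_simp
  ring_nf
  simp [Complex.I_sq]
  ring

lemma norm_exp_I_mul (k r : ℝ) : ‖Complex.exp (Complex.I * k * r)‖ = 1 := by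
  rw [Complex.norm_exp]
  simp

lemma norm_den (c : ℝ) (hc : 0 ≤ c) (n : ℕ) (r : ℝ) (hr : 0 ≤ r) :
    ‖((c : ℂ) * (Real.pi : ℂ) * (r : ℂ) ^ n)‖ = c * Real.pi * r ^ n := by
  rw [norm_mul, norm_mul, norm_pow, Complex.norm_real, Complex.norm_real, Complex.norm_real]
  rw [Real.norm_eq_abs, Real.norm_eq_abs, Real.norm_eq_abs,
    abs_of_nonneg hc, abs_of_nonneg Real.pi_pos.le, abs_of_nonneg hr]

lemma norm_Psi_le {k r c : ℝ} (hk : 0 ≤ k) (hc : 0 < c) (hcr : c ≤ r) :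
    ‖Psi k r‖ ≤ (k / c ^ 2 + 1 / c ^ 3) / (4 * Real.pi) := by
  have hr : 0 < r := hc.trans_le hcr
  have hnum : ‖Complex.exp (Complex.I * k * r) * (Complex.I * k * r - 1)‖ ≤ k * r + 1 := by
    rw [norm_mul, norm_exp_I_mul, one_mul]
    calc ‖Complex.I * k * r - 1‖ ≤ ‖Complex.I * (k:ℂ) * (r:ℂ)‖ + ‖(1:ℂ)‖ := norm_sub_le _ _
      _ = k * r + 1 := by
          rw [norm_mul, norm_mul, Complex.norm_I, one_mul, Complex.norm_real,
            Complex.norm_real, Real.norm_eq_abs, Real.norm_eq_abs,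
            abs_of_nonneg hk, abs_of_nonneg hr.le, norm_one]
  have hden : ‖((4:ℂ) * (Real.pi : ℂ) * (r : ℂ) ^ 3)‖ = 4 * Real.pi * r ^ 3 := by
    have := norm_den 4 (by norm_num) 3 r hr.le
    simpa using this
  have h1 : ‖Psi k r‖ ≤ (k * r + 1) / (4 * Real.pi * r ^ 3) := by
    rw [Psi, norm_div, hden]
    gcongr
  have h2 : (k * r + 1) / (4 * Real.pi * r ^ 3) = (k / r ^ 2 + 1 / r ^ 3) / (4 * Real.pi) := by
    field_simp
  have h3 : (k / r ^ 2 + 1 / r ^ 3) / (4 * Real.pi)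
      ≤ (k / c ^ 2 + 1 / c ^ 3) / (4 * Real.pi) := by
    gcongr <;> positivity
  calc ‖Psi k r‖ ≤ (k * r + 1) / (4 * Real.pi * r ^ 3) := h1
    _ = (k / r ^ 2 + 1 / r ^ 3) / (4 * Real.pi) := h2
    _ ≤ _ := h3

lemma norm_Psi_deriv_le {k r c : ℝ} (hk : 0 ≤ k) (hc : 0 < c) (hcr : c ≤ r) :
    ‖Complex.exp (Complex.I * k * r) * (3 - 3 * Complex.I * k * r - (k * r : ℝ) ^ 2)
        / (4 * Real.pi * r ^ 4)‖
      ≤ (k ^ 2 / c ^ 2 + 3 * k / c ^ 3 + 3 / c ^ 4) / (4 * Real.pi) := by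
  have hr : 0 < r := hc.trans_le hcr
  have hnum : ‖Complex.exp (Complex.I * k * r) * (3 - 3 * Complex.I * k * r - (k * r : ℝ) ^ 2)‖
      ≤ k ^ 2 * r ^ 2 + 3 * (k * r) + 3 := by
    rw [norm_mul, norm_exp_I_mul, one_mul]
    have e1 : ‖((3:ℂ) - 3 * Complex.I * k * r)‖ ≤ 3 + 3 * (k * r) := by
      calc ‖((3:ℂ) - 3 * Complex.I * k * r)‖
          ≤ ‖(3:ℂ)‖ + ‖(3:ℂ) * Complex.I * (k:ℂ) * (r:ℂ)‖ := norm_sub_le _ _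
        _ = 3 + 3 * (k * r) := by
            rw [norm_mul, norm_mul, norm_mul, Complex.norm_I, Complex.norm_real,
              Complex.norm_real, Real.norm_eq_abs, Real.norm_eq_abs,
              abs_of_nonneg hk, abs_of_nonneg hr.le]
            simp
            ring
    have e2 : ‖(((k * r : ℝ) : ℂ)) ^ 2‖ = k ^ 2 * r ^ 2 := by
      rw [norm_pow, Complex.norm_real, Real.norm_eq_abs, abs_of_nonneg (by positivity)]
      ring
    calc ‖(3:ℂ) - 3 * Complex.I * k * r - ((k * r : ℝ) : ℂ) ^ 2‖
        ≤ ‖((3:ℂ) - 3 * Complex.I * k * r)‖ + ‖(((k * r : ℝ):ℂ)) ^ 2‖ := norm_sub_le _ _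
      _ ≤ 3 + 3 * (k * r) + k ^ 2 * r ^ 2 := by rw [e2]; linarith [e1]
      _ = k ^ 2 * r ^ 2 + 3 * (k * r) + 3 := by ring
  have hden : ‖((4:ℂ) * (Real.pi : ℂ) * (r : ℂ) ^ 4)‖ = 4 * Real.pi * r ^ 4 := by
    have := norm_den 4 (by norm_num) 4 r hr.le
    simpa using this
  have h1 : ‖Complex.exp (Complex.I * k * r) * (3 - 3 * Complex.I * k * r - (k * r : ℝ) ^ 2)
      / (4 * Real.pi * r ^ 4)‖ ≤ (k ^ 2 * r ^ 2 + 3 * (k * r) + 3) / (4 * Real.pi * r ^ 4) := by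
    rw [norm_div, hden]
    gcongr
  have h2 : (k ^ 2 * r ^ 2 + 3 * (k * r) + 3) / (4 * Real.pi * r ^ 4)
      = (k ^ 2 / r ^ 2 + 3 * k / r ^ 3 + 3 / r ^ 4) / (4 * Real.pi) := by
    field_simp
  have h3 : (k ^ 2 / r ^ 2 + 3 * k / r ^ 3 + 3 / r ^ 4) / (4 * Real.pi)
      ≤ (k ^ 2 / c ^ 2 + 3 * k / c ^ 3 + 3 / c ^ 4) / (4 * Real.pi) := by
    gcongr <;> positivity
  calc _ ≤ (k ^ 2 * r ^ 2 + 3 * (k * r) + 3) / (4 * Real.pi * r ^ 4) := h1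
    _ = (k ^ 2 / r ^ 2 + 3 * k / r ^ 3 + 3 / r ^ 4) / (4 * Real.pi) := h2
    _ ≤ _ := h3

lemma grad_g_eq (k : ℝ) (y x : R3) (h : x ≠ y) :
    grad (fun w => g k w y) x = fun j => Psi k ‖x - y‖ * ((x - y) j : ℂ) := by
  have hv : x - y ≠ 0 := sub_ne_zero.mpr h
  have hr : (0:ℝ) < ‖x - y‖ := norm_pos_iff.mpr hv
  have hpi : Real.pi ≠ 0 := Real.pi_ne_zero
  -- derivative of w ↦ ‖w - y‖
  have hsub : HasFDerivAt (fun w : R3 => w - y) (ContinuousLinearMap.id ℝ R3) x :=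
    (hasFDerivAt_id x).sub_const y
  have hnorm : HasFDerivAt (fun w : R3 => ‖w - y‖) (‖x - y‖⁻¹ • (innerSL ℝ (x - y))) x := by
    have := (hasFDerivAt_norm_of_ne hv).comp x hsub
    rw [ContinuousLinearMap.comp_id] at this
    exact this
  have hcoe : HasFDerivAt (fun w : R3 => ((‖w - y‖ : ℝ) : ℂ))
      (Complex.ofRealCLM.comp (‖x - y‖⁻¹ • (innerSL ℝ (x - y)))) x :=
    Complex.ofRealCLM.hasFDerivAt.comp x hnorm
  have hzne : ((‖x - y‖ : ℝ) : ℂ) ≠ 0 := by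
    exact_mod_cast hr.ne'
  have hPhi := hasDerivAt_Phi k hzne
  have key := HasDerivAt.comp_hasFDerivAt (f := fun w : R3 => ((‖w - y‖ : ℝ) : ℂ)) x hPhi hcoe
  have hfun : ((Phi k) ∘ fun w : R3 => ((‖w - y‖ : ℝ) : ℂ)) = fun w => g k w y := rfl
  rw [hfun] at key
  funext j
  have hfd := key.fderiv
  show pd j (fun w => g k w y) x = _
  rw [pd, hfd]
  simp only [ContinuousLinearMap.smul_apply, ContinuousLinearMap.coe_comp', Function.comp_apply,
    Complex.ofRealCLM_apply, ContinuousLinearMap.coe_smul', Pi.smul_apply, innerSL_apply_apply]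
  have hinner : (inner ℝ (x - y) (EuclideanSpace.single j (1:ℝ)) : ℝ) = (x - y) j := by
    rw [real_inner_comm, EuclideanSpace.inner_single_left]
    simp
  rw [hinner]
  rw [Psi]
  have hrc : ((‖x - y‖ : ℝ) : ℂ) ≠ 0 := hzne
  simp only [smul_eq_mul]
  push_cast
  field_simp

lemma norm3_mul_vec (c : ℂ) (v : R3) :
    norm3 (fun j => c * (v j : ℂ)) = ‖c‖ * ‖v‖ := by
  rw [norm3, EuclideanSpace.norm_eq, EuclideanSpace.norm_eq]
  have h : ∀ j : Fin 3,
      ‖(WithLp.equiv 2 (Fin 3 → ℂ)).symm (fun j => c * ((v j : ℝ) : ℂ)) j‖ ^ 2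
        = ‖c‖ ^ 2 * ‖v j‖ ^ 2 := by
    intro j
    rw [WithLp.equiv_symm_apply, PiLp.toLp_apply, norm_mul, Complex.norm_real]
    ring
  rw [Finset.sum_congr rfl (fun j _ => h j), ← Finset.mul_sum,
    Real.sqrt_mul (by positivity), Real.sqrt_sq (norm_nonneg c)]

lemma norm3_add_le (u w : C3) : norm3 (u + w) ≤ norm3 u + norm3 w := by
  rw [norm3, norm3, norm3]
  have : (WithLp.equiv 2 (Fin 3 → ℂ)).symm (u + w)
      = (WithLp.equiv 2 (Fin 3 → ℂ)).symm u + (WithLp.equiv 2 (Fin 3 → ℂ)).symm w := rfl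
  rw [this]
  exact norm_add_le _ _

set_option maxHeartbeats 1000000 in
/-- there is an absolute constant C > 0 with
‖∇_x g(x,t) − ∇_x g(x,x₁)‖ ≤ C ‖t−x₁‖ (k²/d + k/d² + 1/d³), d = ‖x−x₁‖,
whenever k ≥ 0, ‖t−x₁‖ ≤ ‖x−x₁‖/2 and x ≠ x₁. -/
theorem green_grad_diff_bound :
    ∃ C > 0, ∀ (k : ℝ), 0 ≤ k → ∀ x x₁ t : R3,
      ‖t - x₁‖ ≤ ‖x - x₁‖ / 2 → x ≠ x₁ →
      norm3 (grad (fun w => g k w t) x - grad (fun w => g k w x₁) x)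
        ≤ C * ‖t - x₁‖ *
            (k ^ 2 / ‖x - x₁‖ + k / ‖x - x₁‖ ^ 2 + 1 / ‖x - x₁‖ ^ 3) := by
  refine ⟨56, by norm_num, ?_⟩
  intro k hk x x₁ t hta hxx
  set d := ‖x - x₁‖ with hd_def
  set a := ‖t - x₁‖ with ha_def
  have hd : 0 < d := norm_pos_iff.mpr (sub_ne_zero.mpr hxx)
  have ha : 0 ≤ a := norm_nonneg _
  have hc : (0:ℝ) < d / 2 := by linarith
  have hsubeq : (x - x₁) - (t - x₁) = x - t := by abel
  have hrt_ge : d / 2 ≤ ‖x - t‖ := by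
    have h1 : d - a ≤ ‖(x - x₁) - (t - x₁)‖ := norm_sub_norm_le _ _
    rw [hsubeq] at h1
    linarith
  have hrt_pos : 0 < ‖x - t‖ := lt_of_lt_of_le hc hrt_ge
  have hxt : x ≠ t := by
    intro hh
    rw [hh] at hrt_pos
    simp at hrt_pos
  set rt := ‖x - t‖ with hrt_def
  have hGt := grad_g_eq k t x hxt
  have hG1 := grad_g_eq k x₁ x hxx
  have hdiff : grad (fun w => g k w t) x - grad (fun w => g k w x₁) x
      = (fun j => Psi k rt * (((x₁ - t) j : ℝ) : ℂ))
        + (fun j => (Psi k rt - Psi k d) * (((x - x₁) j : ℝ) : ℂ)) := by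
    rw [hGt, hG1]
    funext j
    simp only [Pi.sub_apply, Pi.add_apply]
    rw [PiLp.sub_apply, PiLp.sub_apply, PiLp.sub_apply]
    push_cast
    ring
  rw [hdiff]
  have hT1 : norm3 (fun j => Psi k rt * (((x₁ - t) j : ℝ) : ℂ)) = ‖Psi k rt‖ * a := by
    rw [norm3_mul_vec, norm_sub_rev x₁ t]
  have hT2 : norm3 (fun j => (Psi k rt - Psi k d) * (((x - x₁) j : ℝ) : ℂ))
      = ‖Psi k rt - Psi k d‖ * d := norm3_mul_vec _ _
  have hPsi_t : ‖Psi k rt‖ ≤ (k / (d/2) ^ 2 + 1 / (d/2) ^ 3) / (4 * Real.pi) :=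
    norm_Psi_le hk hc hrt_ge
  set M := (k ^ 2 / (d/2) ^ 2 + 3 * k / (d/2) ^ 3 + 3 / (d/2) ^ 4) / (4 * Real.pi) with hM_def
  have hM_nonneg : 0 ≤ M := by
    rw [hM_def]
    positivity
  have hmvt : ‖Psi k rt - Psi k d‖ ≤ M * a := by
    have hmem_d : d ∈ Set.Ici (d/2) := by
      simp only [Set.mem_Ici]
      linarith
    have hmem_rt : rt ∈ Set.Ici (d/2) := hrt_ge
    have h := Convex.norm_image_sub_le_of_norm_hasDerivWithin_le
      (f := fun s : ℝ => Psi k s)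
      (f' := fun r : ℝ => Complex.exp (Complex.I * k * r)
        * (3 - 3 * Complex.I * k * r - (k * r : ℝ) ^ 2) / (4 * Real.pi * r ^ 4))
      (s := Set.Ici (d/2))
      (fun r hr => (hasDerivAt_Psi k (ne_of_gt (lt_of_lt_of_le hc hr))).hasDerivWithinAt)
      (fun r hr => norm_Psi_deriv_le hk hc hr)
      (convex_Ici _) hmem_d hmem_rt
    have habs : ‖rt - d‖ ≤ a := by
      have h2 := abs_norm_sub_norm_le (x - t) (x - x₁)
      rw [show x - t - (x - x₁) = x₁ - t from by abel, norm_sub_rev x₁ t] at h2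
      calc ‖rt - d‖ = |rt - d| := Real.norm_eq_abs _
        _ ≤ a := h2
    calc ‖Psi k rt - Psi k d‖ ≤ M * ‖rt - d‖ := h
      _ ≤ M * a := by
          exact mul_le_mul_of_nonneg_left habs hM_nonneg
  have h4pi : (1:ℝ) ≤ 4 * Real.pi := by nlinarith [Real.pi_gt_three]
  have hA1 : (k / (d/2) ^ 2 + 1 / (d/2) ^ 3) = 4 * k / d ^ 2 + 8 / d ^ 3 := by
    field_simp
    ring
  have hA2 : (k ^ 2 / (d/2) ^ 2 + 3 * k / (d/2) ^ 3 + 3 / (d/2) ^ 4)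
      = 4 * k ^ 2 / d ^ 2 + 24 * k / d ^ 3 + 48 / d ^ 4 := by
    field_simp
    ring
  have hPsi_t' : ‖Psi k rt‖ ≤ 4 * k / d ^ 2 + 8 / d ^ 3 := by
    refine hPsi_t.trans ?_
    rw [hA1]
    exact div_le_self (by positivity) h4pi
  have hM_le : M ≤ 4 * k ^ 2 / d ^ 2 + 24 * k / d ^ 3 + 48 / d ^ 4 := by
    rw [hM_def, hA2]
    exact div_le_self (by positivity) h4pi
  calc norm3 ((fun j => Psi k rt * (((x₁ - t) j : ℝ) : ℂ))
        + (fun j => (Psi k rt - Psi k d) * (((x - x₁) j : ℝ) : ℂ)))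
      ≤ norm3 (fun j => Psi k rt * (((x₁ - t) j : ℝ) : ℂ))
        + norm3 (fun j => (Psi k rt - Psi k d) * (((x - x₁) j : ℝ) : ℂ)) := norm3_add_le _ _
    _ = ‖Psi k rt‖ * a + ‖Psi k rt - Psi k d‖ * d := by rw [hT1, hT2]
    _ ≤ (4 * k / d ^ 2 + 8 / d ^ 3) * a
        + ((4 * k ^ 2 / d ^ 2 + 24 * k / d ^ 3 + 48 / d ^ 4) * a) * d := by
        have hB2 : ‖Psi k rt - Psi k d‖ ≤ (4 * k ^ 2 / d ^ 2 + 24 * k / d ^ 3 + 48 / d ^ 4) * a :=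
          hmvt.trans (mul_le_mul_of_nonneg_right hM_le ha)
        have g1 : ‖Psi k rt‖ * a ≤ (4 * k / d ^ 2 + 8 / d ^ 3) * a :=
          mul_le_mul_of_nonneg_right hPsi_t' ha
        have g2 : ‖Psi k rt - Psi k d‖ * d
            ≤ ((4 * k ^ 2 / d ^ 2 + 24 * k / d ^ 3 + 48 / d ^ 4) * a) * d :=
          mul_le_mul_of_nonneg_right hB2 hd.le
        linarith
    _ = a * (4 * k ^ 2 / d + 28 * k / d ^ 2 + 56 / d ^ 3) := by
        field_simp
        ring
    _ ≤ 56 * a * (k ^ 2 / d + k / d ^ 2 + 1 / d ^ 3) := by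
        have p1 : 0 ≤ a * (k ^ 2 / d) := by positivity
        have p2 : 0 ≤ a * (k / d ^ 2) := by positivity
        have key : 56 * a * (k ^ 2 / d + k / d ^ 2 + 1 / d ^ 3)
            - a * (4 * k ^ 2 / d + 28 * k / d ^ 2 + 56 / d ^ 3)
            = 52 * (a * (k ^ 2 / d)) + 28 * (a * (k / d ^ 2)) := by ring
        linarith
end
end

section
/- Let a > 0, t := (0,0,a), s(θ,φ) := a(cos θ sin φ, sin θ sin φ, cos φ), and N(θ,φ) := s(θ,φ)/a. Define Γ_{pq} := −(1/(4π)) ∫₀^{2π} ∫₀^{π} (s_p(θ,φ) − t_p) N_q(θ,φ) / ‖s(θ,φ) − t‖³ · a² sin φ dφ dθ for 1 ≤ p,q ≤ 3. Then Γ_{11} = −1/3 and Γ_{22} = −1/3. -/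
noncomputable section

open Real MeasureTheory
open scoped BigOperators RealInnerProductSpace

/-- Spherical parametrization s(θ,φ) of the sphere of radius a centered at the origin. -/
def sph (a θ φ : ℝ) : R3 :=
  WithLp.toLp 2 ![a * (Real.cos θ * Real.sin φ), a * (Real.sin θ * Real.sin φ), a * Real.cos φ]

/-- The north pole t = (0,0,a). -/
def tpole (a : ℝ) : R3 := WithLp.toLp 2 ![0, 0, a]

/-- The matrix Γ_{pq} = ∫_S (∂g₀(s,t)/∂s_p) N_q(s) ds for the sphere of radius a
centered at the origin, with t = (0,0,a), N = s/a, in spherical coordinates. -/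
def Gam (a : ℝ) (p q : Fin 3) : ℝ :=
  -(1 / (4 * Real.pi)) *
    ∫ θ in (0:ℝ)..(2 * Real.pi), ∫ φ in (0:ℝ)..Real.pi,
      (sph a θ φ p - tpole a p) * ((a⁻¹ • sph a θ φ) q) /
          ‖sph a θ φ - tpole a‖ ^ 3 * a ^ 2 * Real.sin φ

lemma norm_sph_sub (a θ φ : ℝ) (ha : 0 < a) (h1 : 0 ≤ φ) (h2 : φ ≤ π) :
    ‖sph a θ φ - tpole a‖ = 2 * a * Real.sin (φ / 2) := by
  have hs : 0 ≤ Real.sin (φ / 2) :=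
    Real.sin_nonneg_of_nonneg_of_le_pi (by linarith) (by linarith [Real.pi_pos])
  have key : (∑ i, ‖(sph a θ φ - tpole a) i‖ ^ 2) = (2 * a * Real.sin (φ / 2)) ^ 2 := by
    simp only [PiLp.sub_apply, Real.norm_eq_abs, sq_abs, Fin.sum_univ_three]
    have e0 : sph a θ φ 0 = a * (Real.cos θ * Real.sin φ) := rfl
    have e1 : sph a θ φ 1 = a * (Real.sin θ * Real.sin φ) := rfl
    have e2 : sph a θ φ 2 = a * Real.cos φ := rfl
    have t0 : tpole a 0 = 0 := rfl
    have t1 : tpole a 1 = 0 := rfl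
    have t2 : tpole a 2 = a := rfl
    rw [e0, e1, e2, t0, t1, t2]
    have hc2 : Real.cos φ = 2 * Real.cos (φ / 2) ^ 2 - 1 := by
      have h := Real.cos_two_mul (φ / 2)
      rw [show 2 * (φ / 2) = φ by ring] at h
      linarith
    linear_combination a ^ 2 * Real.sin φ ^ 2 * Real.sin_sq_add_cos_sq θ +
      a ^ 2 * Real.sin_sq φ - 2 * a ^ 2 * hc2 + 4 * a ^ 2 * Real.sin_sq (φ / 2) - 8 * a ^ 2 * Real.sin_sq_add_cos_sq (φ / 2)
  rw [EuclideanSpace.norm_eq, key, Real.sqrt_sq (by positivity)]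

lemma integral_cos_half_cube :
    ∫ φ in (0:ℝ)..π, Real.cos (φ / 2) ^ 3 = 4 / 3 := by
  have h : ∀ φ ∈ Set.uIcc (0:ℝ) π,
      HasDerivAt (fun x => 2 * Real.sin (x / 2) - (2 / 3) * Real.sin (x / 2) ^ 3)
        (Real.cos (φ / 2) ^ 3) φ := by
    intro φ _
    have hs : HasDerivAt (fun x : ℝ => Real.sin (x / 2)) (Real.cos (φ / 2) * (1 / 2)) φ :=
      by have := (Real.hasDerivAt_sin (φ / 2)).comp φ ((hasDerivAt_id φ).div_const 2); exact this
    have h2 := (hs.const_mul 2).sub ((hs.pow 3).const_mul (2 / 3))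
    refine h2.congr_deriv ?_
    have hpy : Real.sin (φ / 2) ^ 2 = 1 - Real.cos (φ / 2) ^ 2 := Real.sin_sq (φ / 2)
    norm_num [hpy]; ring
  rw [intervalIntegral.integral_eq_sub_of_hasDerivAt h
    ((Continuous.intervalIntegrable (by continuity) _ _))]
  norm_num [Real.sin_pi_div_two]

lemma integrand_eq (a θ φ c : ℝ) (ha : 0 < a) (h0 : 0 < φ) (h1 : φ ≤ π) :
    a * (c * Real.sin φ) * (a⁻¹ * (a * (c * Real.sin φ))) /
        ‖sph a θ φ - tpole a‖ ^ 3 * a ^ 2 * Real.sin φ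
      = c ^ 2 * Real.cos (φ / 2) ^ 3 := by
  rw [norm_sph_sub a θ φ ha h0.le h1]
  have hs : 0 < Real.sin (φ / 2) :=
    Real.sin_pos_of_pos_of_lt_pi (by linarith) (by linarith [Real.pi_pos])
  have hsin : Real.sin φ = 2 * Real.sin (φ / 2) * Real.cos (φ / 2) := by
    have h := Real.sin_two_mul (φ / 2)
    rw [show 2 * (φ / 2) = φ by ring] at h
    exact h
  rw [hsin]
  field_simp

lemma inner_eval (a θ c : ℝ) (ha : 0 < a) :
    (∫ φ in (0:ℝ)..π,
        a * (c * Real.sin φ) * (a⁻¹ * (a * (c * Real.sin φ))) /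
          ‖sph a θ φ - tpole a‖ ^ 3 * a ^ 2 * Real.sin φ)
      = c ^ 2 * (4 / 3) := by
  have hcong : (∫ φ in (0:ℝ)..π,
        a * (c * Real.sin φ) * (a⁻¹ * (a * (c * Real.sin φ))) /
          ‖sph a θ φ - tpole a‖ ^ 3 * a ^ 2 * Real.sin φ)
      = ∫ φ in (0:ℝ)..π, c ^ 2 * Real.cos (φ / 2) ^ 3 := by
    apply intervalIntegral.integral_congr_ae
    filter_upwards with φ hφ
    rw [Set.uIoc_of_le Real.pi_pos.le] at hφ
    exact integrand_eq a θ φ c ha hφ.1 hφ.2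
  rw [hcong, intervalIntegral.integral_const_mul, integral_cos_half_cube]

/-- Γ₁₁ = −1/3 and Γ₂₂ = −1/3 for the sphere of radius a > 0. -/
theorem Gamma_diag_first_two (a : ℝ) (ha : 0 < a) :
    Gam a 0 0 = -(1 / 3) ∧ Gam a 1 1 = -(1 / 3) := by
  have hpi : Real.pi ≠ 0 := Real.pi_ne_zero
  constructor
  · have h : Gam a 0 0 = -(1 / (4 * π)) * ∫ θ in (0:ℝ)..(2 * π), Real.cos θ ^ 2 * (4 / 3) := by
      unfold Gam
      congr 1
      apply intervalIntegral.integral_congr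
      intro θ _
      have e0 : ∀ φ : ℝ, sph a θ φ 0 - tpole a 0 = a * (Real.cos θ * Real.sin φ) := by
        intro φ; show a * (Real.cos θ * Real.sin φ) - 0 = _; ring
      have e0' : ∀ φ : ℝ, (a⁻¹ • sph a θ φ) 0 = a⁻¹ * (a * (Real.cos θ * Real.sin φ)) := by
        intro φ; rfl
      simp only [e0, e0']
      exact inner_eval a θ (Real.cos θ) ha
    rw [h, intervalIntegral.integral_mul_const, integral_cos_sq]
    simp only [Real.sin_two_pi, Real.cos_two_pi, Real.sin_zero, Real.cos_zero]
    field_simp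
    ring
  · have h : Gam a 1 1 = -(1 / (4 * π)) * ∫ θ in (0:ℝ)..(2 * π), Real.sin θ ^ 2 * (4 / 3) := by
      unfold Gam
      congr 1
      apply intervalIntegral.integral_congr
      intro θ _
      have e0 : ∀ φ : ℝ, sph a θ φ 1 - tpole a 1 = a * (Real.sin θ * Real.sin φ) := by
        intro φ; show a * (Real.sin θ * Real.sin φ) - 0 = _; ring
      have e0' : ∀ φ : ℝ, (a⁻¹ • sph a θ φ) 1 = a⁻¹ * (a * (Real.sin θ * Real.sin φ)) := by
        intro φ; rfl
      simp only [e0, e0']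
      exact inner_eval a θ (Real.sin θ) ha
    rw [h, intervalIntegral.integral_mul_const, integral_sin_sq]
    simp only [Real.sin_two_pi, Real.cos_two_pi, Real.sin_zero, Real.cos_zero]
    field_simp
    ring
end
end

section
/- Let a > 0, t := (0,0,a), s(θ,φ) := a(cos θ sin φ, sin θ sin φ, cos φ), and N(θ,φ) := s(θ,φ)/a. Define Γ_{pq} := −(1/(4π)) ∫₀^{2π} ∫₀^{π} (s_p(θ,φ) − t_p) N_q(θ,φ) / ‖s(θ,φ) − t‖³ · a² sin φ dφ dθ for 1 ≤ p,q ≤ 3. Then Γ_{33} = 1/6. -/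
noncomputable section

open Real MeasureTheory
open scoped BigOperators RealInnerProductSpace

lemma inner_pt (a : ℝ) (ha : 0 < a) (θ φ : ℝ) (hφ : φ ∈ Set.Ioc 0 Real.pi) :
    (sph a θ φ 2 - tpole a 2) * ((a⁻¹ • sph a θ φ) 2) /
        ‖sph a θ φ - tpole a‖ ^ 3 * a ^ 2 * Real.sin φ
      = -(Real.cos φ * Real.cos (φ/2)) / 2 := by
  have hs : 0 < Real.sin (φ/2) :=
    Real.sin_pos_of_pos_of_lt_pi (by linarith [hφ.1]) (by linarith [hφ.2, Real.pi_pos])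
  have hφ2 : (2:ℝ) * (φ/2) = φ := by ring
  have hc2 := Real.cos_two_mul (φ/2); rw [hφ2] at hc2
  have hs2 := Real.sin_two_mul (φ/2); rw [hφ2] at hs2
  have hsc := Real.sin_sq_add_cos_sq (φ/2)
  have hcos : Real.cos φ = 1 - 2 * Real.sin (φ/2) ^ 2 := by linarith
  have hnorm : ‖sph a θ φ - tpole a‖ = 2 * a * Real.sin (φ/2) := by
    rw [EuclideanSpace.norm_eq]
    simp only [Fin.sum_univ_three, PiLp.sub_apply, sph, tpole, PiLp.toLp_apply, Real.norm_eq_abs, sq_abs,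
      Matrix.cons_val_zero, Matrix.cons_val_one, Matrix.head_cons, Matrix.cons_val_two,
      Matrix.tail_cons]
    rw [show (a * (Real.cos θ * Real.sin φ) - 0) ^ 2 + (a * (Real.sin θ * Real.sin φ) - 0) ^ 2 +
        (a * Real.cos φ - a) ^ 2 = (2 * a * Real.sin (φ/2)) ^ 2 by
      rw [hs2, hcos]
      linear_combination (4*a^2*Real.sin (φ/2)^2*Real.cos (φ/2)^2) * Real.sin_sq_add_cos_sq θ +
        (4*a^2*Real.sin (φ/2)^2) * hsc]
    exact Real.sqrt_sq (by positivity)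
  rw [hnorm]
  simp only [sph, tpole, PiLp.toLp_apply, PiLp.smul_apply, smul_eq_mul, Matrix.cons_val_two, Matrix.tail_cons,
    Matrix.head_cons]
  rw [hcos, hs2]
  field_simp
  ring

lemma inner_int (a : ℝ) (ha : 0 < a) (θ : ℝ) :
    (∫ φ in (0:ℝ)..Real.pi, (sph a θ φ 2 - tpole a 2) * ((a⁻¹ • sph a θ φ) 2) /
        ‖sph a θ φ - tpole a‖ ^ 3 * a ^ 2 * Real.sin φ) = -(1/3) := by
  rw [intervalIntegral.integral_congr_ae
      (g := fun φ => -(Real.cos φ * Real.cos (φ/2)) / 2)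
      (Filter.Eventually.of_forall fun φ hφ => by
        rw [Set.uIoc_of_le Real.pi_pos.le] at hφ
        exact inner_pt a ha θ φ hφ)]
  have key : ∀ x ∈ Set.uIcc (0:ℝ) Real.pi,
      HasDerivAt (fun φ => -((Real.sin (3/2*φ)/3 + Real.sin (1/2*φ))/2))
        (-(Real.cos x * Real.cos (x/2)) / 2) x := by
    intro x _
    have d1 : HasDerivAt (fun φ : ℝ => Real.sin (3/2*φ)) (Real.cos (3/2*x) * (3/2*1)) x :=
      ((hasDerivAt_id x).const_mul (3/2)).sin
    have d2 : HasDerivAt (fun φ : ℝ => Real.sin (1/2*φ)) (Real.cos (1/2*x) * (1/2*1)) x :=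
      ((hasDerivAt_id x).const_mul (1/2)).sin
    have := (((d1.div_const 3).add d2).div_const 2).neg
    refine this.congr_deriv ?_
    rw [show (3/2:ℝ)*x = x + x/2 by ring, show (1/2:ℝ)*x = x - x/2 by ring,
      Real.cos_add, Real.cos_sub]
    ring
  rw [intervalIntegral.integral_eq_sub_of_hasDerivAt key
    (Continuous.intervalIntegrable (by continuity) _ _)]
  have h1 : Real.sin (3/2*Real.pi) = -1 := by
    rw [show (3/2)*Real.pi = Real.pi + Real.pi/2 by ring, Real.sin_add]; simp
  have h2 : Real.sin ((1:ℝ)/2*Real.pi) = 1 := by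
    rw [show (1:ℝ)/2*Real.pi = Real.pi/2 by ring, Real.sin_pi_div_two]
  norm_num [h1, h2]

/-- Γ₃₃ = 1/6 for the sphere of radius a > 0. -/
theorem Gamma_diag_third (a : ℝ) (ha : 0 < a) :
    Gam a 2 2 = 1 / 6 := by
  unfold Gam
  rw [intervalIntegral.integral_congr (g := fun _ => (-(1/3) : ℝ))
    (fun θ _ => inner_int a ha θ)]
  rw [intervalIntegral.integral_const]
  have hπ : Real.pi ≠ 0 := Real.pi_ne_zero
  field_simp
  ring
end
end

section
/- Let a > 0, t := (0,0,a), s(θ,φ) := a(cos θ sin φ, sin θ sin φ, cos φ), and N(θ,φ) := s(θ,φ)/a. Define Γ_{pq} := −(1/(4π)) ∫₀^{2π} ∫₀^{π} (s_p(θ,φ) − t_p) N_q(θ,φ) / ‖s(θ,φ) − t‖³ · a² sin φ dφ dθ for 1 ≤ p,q ≤ 3. Then Γ_{pq} = 0 whenever p ≠ q. -/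
noncomputable section

open Real MeasureTheory
open scoped BigOperators RealInnerProductSpace

lemma norm_indep (a θ φ : ℝ) :
    ‖sph a θ φ - tpole a‖ = ‖sph a 0 φ - tpole a‖ := by
  rw [EuclideanSpace.norm_eq, EuclideanSpace.norm_eq]
  congr 1
  simp only [PiLp.sub_apply, sph, tpole, PiLp.toLp_apply, Fin.sum_univ_three,
    Matrix.cons_val_zero, Matrix.cons_val_one, Matrix.head_cons,
    Matrix.cons_val_two, Matrix.tail_cons, Real.norm_eq_abs, sq_abs,
    Real.cos_zero, Real.sin_zero]
  nlinarith [Real.sin_sq_add_cos_sq θ, sq_nonneg (Real.sin φ)]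

lemma cv0 (x y z : ℝ) (h : 0 < 3) : (![x,y,z] : Fin 3 → ℝ) ⟨0, h⟩ = x := rfl
lemma cv1 (x y z : ℝ) (h : 1 < 3) : (![x,y,z] : Fin 3 → ℝ) ⟨1, h⟩ = y := rfl
lemma cv2 (x y z : ℝ) (h : 2 < 3) : (![x,y,z] : Fin 3 → ℝ) ⟨2, h⟩ = z := rfl

lemma double_zero (F : ℝ → ℝ → ℝ) (T f : ℝ → ℝ)
    (h : ∀ θ φ, F θ φ = T θ * f φ)
    (hT : (∫ θ in (0:ℝ)..(2*Real.pi), T θ) = 0) :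
    (∫ θ in (0:ℝ)..(2*Real.pi), ∫ φ in (0:ℝ)..Real.pi, F θ φ) = 0 := by
  have h1 : ∀ θ, (∫ φ in (0:ℝ)..Real.pi, F θ φ)
      = T θ * ∫ φ in (0:ℝ)..Real.pi, f φ := by
    intro θ
    simp_rw [h]
    exact intervalIntegral.integral_const_mul _ _
  simp_rw [h1, intervalIntegral.integral_mul_const, hT, zero_mul]

lemma int_cos0 : (∫ θ in (0:ℝ)..(2*Real.pi), Real.cos θ) = 0 := by
  simp [integral_cos, Real.sin_two_pi]

lemma int_sin0 : (∫ θ in (0:ℝ)..(2*Real.pi), Real.sin θ) = 0 := by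
  simp [integral_sin, Real.cos_two_pi]

lemma int_sincos0 : (∫ θ in (0:ℝ)..(2*Real.pi), Real.sin θ * Real.cos θ) = 0 := by
  simp [integral_sin_mul_cos₁, Real.sin_two_pi]

/-- Γ_{pq} = 0 for p ≠ q, for the sphere of radius a > 0. -/
theorem Gamma_offdiag (a : ℝ) (ha : 0 < a) :
    ∀ p q : Fin 3, p ≠ q → Gam a p q = 0 := by
  intro p q hpq
  have main : ∀ (T f : ℝ → ℝ),
      (∀ θ φ, (sph a θ φ p - tpole a p) * ((a⁻¹ • sph a θ φ) q) /
          ‖sph a θ φ - tpole a‖ ^ 3 * a ^ 2 * Real.sin φ = T θ * f φ) →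
      (∫ θ in (0:ℝ)..(2*Real.pi), T θ) = 0 → Gam a p q = 0 := by
    intro T f hfac hT
    unfold Gam
    rw [double_zero _ T f hfac hT, mul_zero]
  fin_cases p <;> fin_cases q <;> simp only [Fin.isValue] at hpq ⊢
  · exact absurd rfl hpq
  · exact main (fun θ => Real.sin θ * Real.cos θ)
      (fun φ => a * Real.sin φ * (a⁻¹ * (a * Real.sin φ)) /
          ‖sph a 0 φ - tpole a‖ ^ 3 * a ^ 2 * Real.sin φ)
      (fun θ φ => by
        rw [norm_indep]
        simp only [sph, tpole, PiLp.smul_apply, PiLp.toLp_apply, smul_eq_mul,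
          Matrix.cons_val_zero, Matrix.cons_val_one, Matrix.head_cons,
          Matrix.cons_val_two, Matrix.tail_cons, cv0, cv1, cv2]
        ring) int_sincos0
  · exact main (fun θ => Real.cos θ)
      (fun φ => a * Real.sin φ * (a⁻¹ * (a * Real.cos φ)) /
          ‖sph a 0 φ - tpole a‖ ^ 3 * a ^ 2 * Real.sin φ)
      (fun θ φ => by
        rw [norm_indep]
        simp only [sph, tpole, PiLp.smul_apply, PiLp.toLp_apply, smul_eq_mul,
          Matrix.cons_val_zero, Matrix.cons_val_one, Matrix.head_cons,
          Matrix.cons_val_two, Matrix.tail_cons, cv0, cv1, cv2]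
        ring) int_cos0
  · exact main (fun θ => Real.sin θ * Real.cos θ)
      (fun φ => a * Real.sin φ * (a⁻¹ * (a * Real.sin φ)) /
          ‖sph a 0 φ - tpole a‖ ^ 3 * a ^ 2 * Real.sin φ)
      (fun θ φ => by
        rw [norm_indep]
        simp only [sph, tpole, PiLp.smul_apply, PiLp.toLp_apply, smul_eq_mul,
          Matrix.cons_val_zero, Matrix.cons_val_one, Matrix.head_cons,
          Matrix.cons_val_two, Matrix.tail_cons, cv0, cv1, cv2]
        ring) int_sincos0
  · exact absurd rfl hpq
  · exact main (fun θ => Real.sin θ)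
      (fun φ => a * Real.sin φ * (a⁻¹ * (a * Real.cos φ)) /
          ‖sph a 0 φ - tpole a‖ ^ 3 * a ^ 2 * Real.sin φ)
      (fun θ φ => by
        rw [norm_indep]
        simp only [sph, tpole, PiLp.smul_apply, PiLp.toLp_apply, smul_eq_mul,
          Matrix.cons_val_zero, Matrix.cons_val_one, Matrix.head_cons,
          Matrix.cons_val_two, Matrix.tail_cons, cv0, cv1, cv2]
        ring) int_sin0
  · exact main (fun θ => Real.cos θ)
      (fun φ => (a * Real.cos φ - a) * (a⁻¹ * (a * Real.sin φ)) /
          ‖sph a 0 φ - tpole a‖ ^ 3 * a ^ 2 * Real.sin φ)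
      (fun θ φ => by
        rw [norm_indep]
        simp only [sph, tpole, PiLp.smul_apply, PiLp.toLp_apply, smul_eq_mul,
          Matrix.cons_val_zero, Matrix.cons_val_one, Matrix.head_cons,
          Matrix.cons_val_two, Matrix.tail_cons, cv0, cv1, cv2]
        ring) int_cos0
  · exact main (fun θ => Real.sin θ)
      (fun φ => (a * Real.cos φ - a) * (a⁻¹ * (a * Real.sin φ)) /
          ‖sph a 0 φ - tpole a‖ ^ 3 * a ^ 2 * Real.sin φ)
      (fun θ φ => by
        rw [norm_indep]
        simp only [sph, tpole, PiLp.smul_apply, PiLp.toLp_apply, smul_eq_mul,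
          Matrix.cons_val_zero, Matrix.cons_val_one, Matrix.head_cons,
          Matrix.cons_val_two, Matrix.tail_cons, cv0, cv1, cv2]
        ring) int_sin0
  · exact absurd rfl hpq
end
end

section
/- Let k ≥ 0 and y ∈ ℝ³. There exists a constant C > 0 (depending on k and ‖y‖) such that for every x ∈ ℝ³ with ‖x‖ ≥ 2‖y‖ + 1, |⟨x/‖x‖, ∇_x g(x,y)⟩ − i k g(x,y)| ≤ C/‖x‖², where the scalar product on ℂ³ is the bilinear extension of that on ℝ³. (Hence x ↦ g(x,y) satisfies the Sommerfeld radiation condition ∂g/∂r − ikg = o(1/r) as r = ‖x‖ → ∞.) -/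
noncomputable section

open Real MeasureTheory
open scoped BigOperators RealInnerProductSpace

lemma hasFDerivAt_norm_sub' (y x : R3) (hxy : x ≠ y) :
    HasFDerivAt (fun w : R3 => ‖w - y‖) ((‖x - y‖)⁻¹ • innerSL ℝ (x - y)) x := by
  have hr : (0:ℝ) < ‖x - y‖ := by rw [norm_pos_iff]; exact sub_ne_zero.mpr hxy
  have h1 : HasFDerivAt (fun w : R3 => w - y) (ContinuousLinearMap.id ℝ _) x :=
    (hasFDerivAt_id x).sub_const y
  have hq := h1.norm_sq
  have hs : HasDerivAt Real.sqrt (1 / (2 * Real.sqrt (‖x - y‖ ^ 2))) (‖x - y‖ ^ 2) :=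
    Real.hasDerivAt_sqrt (by positivity)
  have h4 := hs.comp_hasFDerivAt x hq
  have hfun : (Real.sqrt ∘ fun w : R3 => ‖w - y‖ ^ 2) = fun w => ‖w - y‖ := by
    funext w; simp [Function.comp, Real.sqrt_sq (norm_nonneg _)]
  rw [hfun] at h4
  refine h4.congr_fderiv ?_
  ext v
  simp [Real.sqrt_sq hr.le]
  field_simp

lemma hasDerivAt_phi' (k r : ℝ) (hr : 0 < r) :
    HasDerivAt (fun t : ℝ => Complex.exp (Complex.I * k * t) / ((4:ℂ) * Real.pi * t))
      (Complex.exp (Complex.I * k * r) * (Complex.I * k * r - 1) / ((4:ℂ) * Real.pi * r ^ 2)) r := by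
  have hofReal : HasDerivAt (fun t : ℝ => (t : ℂ)) 1 r := by
    simpa using (hasDerivAt_id r).ofReal_comp
  have hu : HasDerivAt (fun t : ℝ => Complex.exp (Complex.I * k * t))
      (Complex.exp (Complex.I * k * r) * (Complex.I * k)) r := by
    simpa using (hofReal.const_mul (Complex.I * k)).cexp
  have hd : HasDerivAt (fun t : ℝ => ((4:ℂ) * Real.pi * t)) ((4:ℂ) * Real.pi) r := by
    simpa using hofReal.const_mul ((4:ℂ) * Real.pi)
  have hpi : (Real.pi : ℂ) ≠ 0 := by exact_mod_cast Real.pi_ne_zero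
  have hrC : (r : ℂ) ≠ 0 := by exact_mod_cast hr.ne'
  have hden : (4:ℂ) * Real.pi * r ≠ 0 := by simp [hpi, hrC]
  have := hu.div hd hden
  refine this.congr_deriv ?_
  field_simp

lemma grad_g_formula (k : ℝ) (y x : R3) (hxy : x ≠ y) (j : Fin 3) :
    grad (fun w => g k w y) x j
      = Complex.exp (Complex.I * k * ‖x - y‖) * (Complex.I * k * ‖x - y‖ - 1)
          / ((4:ℂ) * Real.pi * ‖x - y‖ ^ 3) * ((x - y) j) := by
  have hr : (0:ℝ) < ‖x - y‖ := by rw [norm_pos_iff]; exact sub_ne_zero.mpr hxy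
  have hn := hasFDerivAt_norm_sub' y x hxy
  have hφ := (hasDerivAt_phi' k ‖x - y‖ hr).hasFDerivAt
  have hg0 := hφ.comp x hn
  have hfun : ((fun t : ℝ => Complex.exp (Complex.I * k * t) / ((4:ℂ) * Real.pi * t))
      ∘ fun w : R3 => ‖w - y‖) = fun w => g k w y := rfl
  rw [hfun] at hg0
  unfold grad pd
  rw [hg0.fderiv]
  simp [EuclideanSpace.inner_single_right]
  have hrC : (‖x - y‖ : ℂ) ≠ 0 := by exact_mod_cast hr.ne'
  have hpi : (Real.pi : ℂ) ≠ 0 := by exact_mod_cast Real.pi_ne_zero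
  field_simp

/-- the Green's function satisfies the Sommerfeld radiation condition:
|⟨x/‖x‖, ∇_x g(x,y)⟩ − ik g(x,y)| ≤ C/‖x‖² for ‖x‖ ≥ 2‖y‖ + 1. -/
theorem green_radiation_condition (k : ℝ) (hk : 0 ≤ k) (y : R3) :
    ∃ C > 0, ∀ x : R3, 2 * ‖y‖ + 1 ≤ ‖x‖ →
      ‖(∑ j, ((x j / ‖x‖ : ℝ) : ℂ) * grad (fun w => g k w y) x j)
          - Complex.I * k * g k x y‖ ≤ C / ‖x‖ ^ 2 := by
  refine ⟨(1 + 2 * k * ‖y‖) / Real.pi, by positivity, fun x hx => ?_⟩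
  set R : ℝ := ‖x‖ with hRdef
  have hy0 : (0:ℝ) ≤ ‖y‖ := norm_nonneg y
  have hR1 : (1:ℝ) ≤ R := by linarith
  have hR0 : (0:ℝ) < R := by linarith
  have hr_lb : R / 2 ≤ ‖x - y‖ := by
    have h1 : ‖x‖ - ‖y‖ ≤ ‖x - y‖ := norm_sub_norm_le x y
    rw [← hRdef] at h1
    linarith
  have hr : (0:ℝ) < ‖x - y‖ := by linarith
  have hxy : x ≠ y := by
    intro h; rw [h] at hr; simp at hr
  set r : ℝ := ‖x - y‖ with hrdef
  set t : ℝ := (inner ℝ x (x - y) : ℝ) with ht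
  set a : ℝ := t / (r * R) with ha
  have hrC : (r : ℂ) ≠ 0 := by exact_mod_cast hr.ne'
  have hRC : (R : ℂ) ≠ 0 := by exact_mod_cast hR0.ne'
  have hpi : (Real.pi : ℂ) ≠ 0 := by exact_mod_cast Real.pi_ne_zero
  have hinner : t = ∑ j, x j * (x - y) j := by
    rw [ht]
    simp [PiLp.inner_apply, RCLike.inner_apply, mul_comm]
  -- rewrite the sum
  have hsum : (∑ j, ((x j / ‖x‖ : ℝ) : ℂ) * grad (fun w => g k w y) x j)
      = Complex.exp (Complex.I * k * r) * (Complex.I * k * r - 1)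
          / ((4:ℂ) * Real.pi * r ^ 3) * t / R := by
    have hterm : ∀ j ∈ Finset.univ, ((x j / ‖x‖ : ℝ) : ℂ) * grad (fun w => g k w y) x j
        = (Complex.exp (Complex.I * k * r) * (Complex.I * k * r - 1)
            / ((4:ℂ) * Real.pi * r ^ 3) / R) * ((x j * (x - y) j : ℝ) : ℂ) := by
      intro j _
      rw [grad_g_formula k y x hxy j]
      rw [← hrdef, ← hRdef]
      push_cast
      field_simp
    rw [Finset.sum_congr rfl hterm, ← Finset.mul_sum, hinner]
    push_cast
    ring
  rw [hsum]
  -- complex identity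
  have hEq : Complex.exp (Complex.I * k * r) * (Complex.I * k * r - 1)
          / ((4:ℂ) * Real.pi * r ^ 3) * t / R - Complex.I * k * g k x y
      = Complex.exp (Complex.I * k * r)
          * (Complex.I * ((k * r * (a - 1) : ℝ) : ℂ) - ((a:ℝ):ℂ)) / ((4:ℂ) * Real.pi * r ^ 2) := by
    have htR : t = a * (r * R) := by rw [ha]; field_simp
    simp only [g, ← hrdef]
    rw [htR]
    push_cast
    field_simp
    ring
  rw [hEq]
  -- norm computations
  have he : ‖Complex.exp (Complex.I * k * r)‖ = 1 := by
    rw [Complex.norm_exp]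
    simp
  have hden : ‖((4:ℂ) * Real.pi * (r:ℂ) ^ 2)‖ = 4 * Real.pi * r ^ 2 := by
    have h9 : ((4:ℂ) * Real.pi * (r:ℂ) ^ 2) = (((4 * Real.pi * r ^ 2 : ℝ)) : ℂ) := by
      push_cast; ring
    rw [h9, Complex.norm_real, Real.norm_eq_abs, abs_of_pos (by positivity)]
  rw [norm_div, norm_mul, he, one_mul, hden]
  -- bounds
  have hat : |t| ≤ R * r := by
    have h8 := abs_real_inner_le_norm x (x - y)
    rw [← ht, ← hrdef, ← hRdef] at h8; exact h8
  have ha1 : |a| ≤ 1 := by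
    rw [ha, abs_div, abs_of_pos (by positivity : (0:ℝ) < r * R)]
    rw [div_le_one (by positivity)]
    calc |t| ≤ R * r := hat
    _ = r * R := by ring
  have hdiff : |t - r * R| ≤ 2 * ‖y‖ * R := by
    have h1 : t = R ^ 2 - (inner ℝ x y : ℝ) := by
      rw [ht, inner_sub_right, real_inner_self_eq_norm_sq, ← hRdef]
    have h2 : |(inner ℝ x y : ℝ)| ≤ R * ‖y‖ := by
      have := abs_real_inner_le_norm x y
      rw [← hRdef] at this; exact this
    have h3 : |R - r| ≤ ‖y‖ := by
      have h7 := abs_norm_sub_norm_le x (x - y)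
      rw [sub_sub_cancel] at h7
      rw [← hrdef, ← hRdef] at h7
      exact h7
    calc |t - r * R| = |R * (R - r) + -((inner ℝ x y : ℝ))| := by rw [h1]; ring_nf
    _ ≤ |R * (R - r)| + |(-((inner ℝ x y : ℝ)))| := abs_add_le _ _
    _ = R * |R - r| + |(inner ℝ x y : ℝ)| := by rw [abs_mul, abs_of_pos hR0, abs_neg]
    _ ≤ R * ‖y‖ + R * ‖y‖ := by gcongr
    _ = 2 * ‖y‖ * R := by ring
  have ha2 : |a - 1| ≤ 2 * ‖y‖ / r := by
    have h6 : a - 1 = (t - r * R) / (r * R) := by rw [ha]; field_simp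
    rw [h6, abs_div, abs_of_pos (by positivity : (0:ℝ) < r * R)]
    rw [div_le_div_iff₀ (by positivity) hr]
    calc |t - r * R| * r ≤ (2 * ‖y‖ * R) * r := by gcongr
    _ = 2 * ‖y‖ * (r * R) := by ring
  have hnum : ‖Complex.I * ((k * r * (a - 1) : ℝ) : ℂ) - ((a:ℝ):ℂ)‖ ≤ 1 + 2 * k * ‖y‖ := by
    set z := Complex.I * ((k * r * (a - 1) : ℝ) : ℂ) - ((a:ℝ):ℂ) with hz
    have hre : z.re = -a := by simp [hz]
    have him : z.im = k * r * (a - 1) := by simp [hz]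
    have h5 := Complex.norm_le_abs_re_add_abs_im z
    rw [hre, him] at h5
    have h4 : |k * r * (a - 1)| ≤ 2 * k * ‖y‖ := by
      rw [abs_mul, abs_of_nonneg (by positivity : (0:ℝ) ≤ k * r)]
      calc k * r * |a - 1| ≤ k * r * (2 * ‖y‖ / r) := by gcongr
      _ = 2 * k * ‖y‖ := by field_simp
    have h5' : |(-a : ℝ)| ≤ 1 := by rw [abs_neg]; exact ha1
    linarith
  -- final comparison
  have hfin : (1 + 2 * k * ‖y‖) / (4 * Real.pi * r ^ 2)
      ≤ ((1 + 2 * k * ‖y‖) / Real.pi) / R ^ 2 := by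
    rw [div_div]
    apply div_le_div_of_nonneg_left (by positivity) (by positivity)
    have hsq : R ^ 2 / 4 ≤ r ^ 2 := by nlinarith
    have h10 := mul_le_mul_of_nonneg_left hsq Real.pi_pos.le
    linarith
  calc ‖Complex.I * ((k * r * (a - 1) : ℝ) : ℂ) - ((a:ℝ):ℂ)‖ / (4 * Real.pi * r ^ 2)
      ≤ (1 + 2 * k * ‖y‖) / (4 * Real.pi * r ^ 2) := by gcongr
    _ ≤ ((1 + 2 * k * ‖y‖) / Real.pi) / R ^ 2 := hfin
end
end
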